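/- Let n ≥ 2 be an integer, and let a_+ denote the unique real root of t^{2n+2} + n·t^{2n+1} = 1 lying in (0,1) and a_- the unique real root lying in (−n−1, −n) (these exist for n ≥ 2). Set g̃(t) = t^n + 2·t^{−(n+1)}. Then for every complex t with a_+ ≤ |t| ≤ 1 one has |g̃(t)| ≤ g̃(a_+), and moreover g̃(1) < g̃(a_+); in other words, the maximum of |g̃| over the closed annulus {t : a_+ ≤ |t| ≤ 1} equals g̃(a_+) = a_+^n + 2·a_+^{−(n+1)} and is strictly larger than g̃(1) = 3. -/

import Mathlib

-- x^k - y^k ≤ k (x - y) for 0 ≤ y ≤ x ≤ 1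
lemma aux1 (k : ℕ) {x y : ℝ} (hy : 0 ≤ y) (hyx : y ≤ x) (hx : x ≤ 1) :
    x ^ k - y ^ k ≤ k * (x - y) := by
  induction k with
  | zero => simp
  | succ m ih =>
    have hym : y ^ m ≤ x ^ m := pow_le_pow_left₀ hy hyx m
    have hx0 : 0 ≤ x := hy.trans hyx
    have hxm : x ^ m ≤ 1 := pow_le_one₀ hx0 hx
    have hym1 : y ^ m ≤ 1 := hym.trans hxm
    have h0 : 0 ≤ y ^ m := pow_nonneg hy m
    rw [pow_succ, pow_succ]
    push_cast
    nlinarith [mul_nonneg (sub_nonneg.2 hym) (sub_nonneg.2 hx)]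

-- (k+1) y^k (x-y) ≤ x^(k+1) - y^(k+1) for 0 ≤ y ≤ x
lemma aux2 (k : ℕ) {x y : ℝ} (hy : 0 ≤ y) (hyx : y ≤ x) :
    ((k : ℝ) + 1) * y ^ k * (x - y) ≤ x ^ (k + 1) - y ^ (k + 1) := by
  induction k with
  | zero => simp
  | succ m ih =>
    have hym : y ^ (m + 1) ≤ x ^ (m + 1) := pow_le_pow_left₀ hy hyx _
    have h0 : 0 ≤ y ^ (m + 1) := pow_nonneg hy _
    have h0' : 0 ≤ y ^ m := pow_nonneg hy _
    have hh1 : y * (((m:ℝ) + 1) * y ^ m * (x - y)) ≤ y * (x ^ (m + 1) - y ^ (m + 1)) :=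
      mul_le_mul_of_nonneg_left ih hy
    have hh2 : y * (((m:ℝ) + 1) * y ^ m * (x - y)) = ((m:ℝ) + 1) * y ^ (m + 1) * (x - y) := by
      rw [pow_succ]; ring
    have hh3 : (0:ℝ) ≤ (x - y) * (x ^ (m + 1) - y ^ (m + 1)) :=
      mul_nonneg (sub_nonneg.2 hyx) (sub_nonneg.2 hym)
    have hh4 : (0:ℝ) ≤ y ^ (m + 1) * (x - y) := mul_nonneg h0 (sub_nonneg.2 hyx)
    rw [pow_succ x (m + 1), pow_succ y (m + 1)]
    push_cast
    nlinarith [hh2 ▸ hh1, hh3, hh4]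

-- monotonicity of h
lemma hmono (n : ℕ) {ap r : ℝ} (hap : 0 < ap) (h1 : ap ≤ r) (h2 : r ≤ 1) :
    r ^ n + 2 * (r ^ (n + 1))⁻¹ ≤ ap ^ n + 2 * (ap ^ (n + 1))⁻¹ := by
  have hr0 : 0 < r := hap.trans_le h1
  have hap1 : ap ≤ 1 := h1.trans h2
  have hapn : (0:ℝ) < ap ^ (n + 1) := pow_pos hap _
  have hrn : (0:ℝ) < r ^ (n + 1) := pow_pos hr0 _
  have hrn1 : r ^ (n + 1) ≤ 1 := pow_le_one₀ hr0.le h2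
  have hapn1 : ap ^ (n + 1) ≤ 1 := pow_le_one₀ hap.le hap1
  have hA : r ^ n - ap ^ n ≤ n * (r - ap) := aux1 n hap.le h1 h2
  have hB : ((n : ℝ) + 1) * ap ^ n * (r - ap) ≤ r ^ (n + 1) - ap ^ (n + 1) :=
    aux2 n hap.le h1
  have hpn : (0:ℝ) < ap ^ n := pow_pos hap _
  have key : (r ^ n - ap ^ n) * (ap ^ (n + 1) * r ^ (n + 1)) ≤
      2 * (r ^ (n + 1) - ap ^ (n + 1)) := by
    have hA0 : 0 ≤ r ^ n - ap ^ n := sub_nonneg.2 (pow_le_pow_left₀ hap.le h1 n)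
    have hD : ap ^ (n + 1) * r ^ (n + 1) ≤ ap ^ n := by
      calc ap ^ (n + 1) * r ^ (n + 1) ≤ ap ^ (n + 1) * 1 :=
            mul_le_mul_of_nonneg_left hrn1 hapn.le
        _ = ap * ap ^ n := by rw [mul_one, pow_succ]; ring
        _ ≤ 1 * ap ^ n := mul_le_mul_of_nonneg_right hap1 hpn.le
        _ = ap ^ n := one_mul _
    have hnu : (0:ℝ) ≤ (n : ℝ) * (r - ap) :=
      mul_nonneg (Nat.cast_nonneg n) (sub_nonneg.2 h1)
    have t1 : (r ^ n - ap ^ n) * (ap ^ (n + 1) * r ^ (n + 1)) ≤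
        ((n : ℝ) * (r - ap)) * ap ^ n :=
      mul_le_mul hA hD (mul_nonneg hapn.le hrn.le) hnu
    nlinarith [t1, hB, mul_nonneg hnu hpn.le, mul_nonneg hpn.le (sub_nonneg.2 h1)]
  have hdiv : r ^ n - ap ^ n ≤
      2 * (r ^ (n + 1) - ap ^ (n + 1)) / (ap ^ (n + 1) * r ^ (n + 1)) :=
    (le_div_iff₀ (by positivity)).2 key
  have heq : 2 * (r ^ (n + 1) - ap ^ (n + 1)) / (ap ^ (n + 1) * r ^ (n + 1)) =
      2 * ((ap ^ (n + 1))⁻¹ - (r ^ (n + 1))⁻¹) := by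
    field_simp
  rw [heq] at hdiv
  linarith

/-- With `n ≥ 2` and `a₊ ∈ (0,1)`, `a₋ ∈ (−n−1,−n)` the real roots of
`t^(2n+2) + n·t^(2n+1) = 1`, and `g̃(t) = tⁿ + 2·t^(−(n+1))`: for every complex `t` with
`a₊ ≤ |t| ≤ 1` one has `|g̃(t)| ≤ g̃(a₊)`, and `g̃(1) < g̃(a₊)`; i.e. the maximum of `|g̃|`
over the closed annulus equals `g̃(a₊)` and is strictly larger than `g̃(1) = 3`. -/
theorem stmt_5 (n : ℕ) (hn : 2 ≤ n)
    (ap : ℝ) (hap : ap ∈ Set.Ioo (0 : ℝ) 1)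
    (hapr : ap ^ (2 * n + 2) + (n : ℝ) * ap ^ (2 * n + 1) = 1)
    (am : ℝ) (ham : am ∈ Set.Ioo (-(n : ℝ) - 1) (-(n : ℝ)))
    (hamr : am ^ (2 * n + 2) + (n : ℝ) * am ^ (2 * n + 1) = 1) :
    (∀ t : ℂ, ap ≤ ‖t‖ → ‖t‖ ≤ 1 →
      ‖t ^ n + 2 * t ^ (-((n : ℤ) + 1))‖ ≤ ap ^ n + 2 * ap ^ (-((n : ℤ) + 1))) ∧
    IsGreatest ((fun t : ℂ => ‖t ^ n + 2 * t ^ (-((n : ℤ) + 1))‖) ''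
        {t : ℂ | ap ≤ ‖t‖ ∧ ‖t‖ ≤ 1})
      (ap ^ n + 2 * ap ^ (-((n : ℤ) + 1))) ∧
    (1 : ℝ) ^ n + 2 * (1 : ℝ) ^ (-((n : ℤ) + 1)) < ap ^ n + 2 * ap ^ (-((n : ℤ) + 1)) ∧
    (1 : ℝ) ^ n + 2 * (1 : ℝ) ^ (-((n : ℤ) + 1)) = 3 := by
  obtain ⟨hap0, hap1⟩ := hap
  have hcast : -((n : ℤ) + 1) = -(((n + 1 : ℕ) : ℤ)) := by push_cast; ring
  have hz : ∀ x : ℝ, x ^ (-((n : ℤ) + 1)) = (x ^ (n + 1))⁻¹ := by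
    intro x
    rw [hcast, zpow_neg, zpow_natCast]
  -- Main bound
  have part1 : ∀ t : ℂ, ap ≤ ‖t‖ → ‖t‖ ≤ 1 →
      ‖t ^ n + 2 * t ^ (-((n : ℤ) + 1))‖ ≤ ap ^ n + 2 * ap ^ (-((n : ℤ) + 1)) := by
    intro t h1 h2
    have habs : ‖t ^ n + 2 * t ^ (-((n : ℤ) + 1))‖ ≤
        (‖t‖) ^ n + 2 * (‖t‖) ^ (-((n : ℤ) + 1)) := by
      calc ‖t ^ n + 2 * t ^ (-((n : ℤ) + 1))‖ ≤
            ‖t ^ n‖ + ‖2 * t ^ (-((n : ℤ) + 1))‖ :=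
              norm_add_le _ _
        _ = (‖t‖) ^ n + 2 * (‖t‖) ^ (-((n : ℤ) + 1)) := by
            rw [norm_pow, norm_mul, norm_zpow, Complex.norm_two]
    refine habs.trans ?_
    rw [hz, hz]
    exact hmono n hap0 h1 h2
  -- value at ap
  have hval : ‖((ap : ℂ)) ^ n + 2 * (ap : ℂ) ^ (-((n : ℤ) + 1))‖ =
      ap ^ n + 2 * ap ^ (-((n : ℤ) + 1)) := by
    have he : ((ap : ℂ)) ^ n + 2 * (ap : ℂ) ^ (-((n : ℤ) + 1)) =
        ((ap ^ n + 2 * ap ^ (-((n : ℤ) + 1)) : ℝ) : ℂ) := by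
      push_cast [Complex.ofReal_zpow]
      ring
    rw [he, Complex.norm_real, Real.norm_eq_abs, abs_of_nonneg]
    have : (0:ℝ) < ap ^ (-((n : ℤ) + 1)) := zpow_pos hap0 _
    positivity
  have habsap : ‖((ap : ℂ))‖ = ap := by
    rw [Complex.norm_real, Real.norm_eq_abs, abs_of_pos hap0]
  -- strict inequality
  have h1z : (1:ℝ) ^ (-((n : ℤ) + 1)) = 1 := one_zpow _
  have hun : ap ^ n < 1 := pow_lt_one₀ hap0.le hap1 (by omega)
  have hun0 : (0:ℝ) < ap ^ n := pow_pos hap0 n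
  have hvn : (0:ℝ) < ap ^ (n + 1) := pow_pos hap0 _
  have hvu : ap ^ (n + 1) ≤ ap ^ n := by
    rw [pow_succ]
    nlinarith
  have key3 : (3 - ap ^ n) * ap ^ (n + 1) < 2 := by
    nlinarith [mul_pos (sub_pos.2 hun) (show (0:ℝ) < 2 - ap ^ n by linarith)]
  have part3 : (1 : ℝ) ^ n + 2 * (1 : ℝ) ^ (-((n : ℤ) + 1)) < ap ^ n + 2 * ap ^ (-((n : ℤ) + 1)) := by
    rw [h1z, one_pow, hz]
    have := (lt_div_iff₀ hvn).2 key3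
    rw [div_eq_mul_inv] at this
    linarith
  refine ⟨part1, ⟨⟨(ap : ℂ), ⟨by rw [habsap], by rw [habsap]; exact hap1.le⟩, hval⟩, ?_⟩,
    part3, by rw [h1z, one_pow]; norm_num⟩
  rintro x ⟨t, ⟨h1, h2⟩, rfl⟩
  exact part1 t h1 h2
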